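/- Let u be a bounded harmonic function on a domain Ω ⊆ ℝ^n vanishing continuously on ∂Ω, and let B be Brownian motion started at z ∈ Ω with exit time T from Ω. If P_z(T < ∞ or |B_t| → ∞) = 1 and u(x) → 0 as |x| → ∞ in Ω, then u ≡ 0 on Ω. -/

import Mathlib

open Filter

/-- `u` is harmonic on `Ω`: it is `C²` there and its Laplacian, computed as the
sum of the second partial derivatives in the coordinate directions, vanishes. -/
def IsHarmonicOn {n : ℕ} (u : EuclideanSpace ℝ (Fin n) → ℝ)
    (Ω : Set (EuclideanSpace ℝ (Fin n))) : Prop :=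
  ContDiffOn ℝ 2 u Ω ∧ ∀ x ∈ Ω, ∑ i : Fin n,
    fderiv ℝ (fun y => fderiv ℝ u y (EuclideanSpace.single i 1)) x
      (EuclideanSpace.single i 1) = 0

lemma second_deriv_nonpos_of_localMax {f : ℝ → ℝ} {c : ℝ}
    (hmax : IsLocalMax f 0)
    (hdiff : ∀ᶠ t in nhds 0, DifferentiableAt ℝ f t)
    (hderiv2 : HasDerivAt (deriv f) c 0) : c ≤ 0 := by
  by_contra h
  push_neg at h
  have h0 : deriv f 0 = 0 := hmax.deriv_eq_zero
  have hslope : Tendsto (slope (deriv f) 0) (nhdsWithin 0 {(0:ℝ)}ᶜ) (nhds c) :=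
    hasDerivAt_iff_tendsto_slope.mp hderiv2
  have hpos : ∀ᶠ t in nhdsWithin (0:ℝ) (Set.Ioi 0), 0 < deriv f t := by
    have h1 : ∀ᶠ t in nhdsWithin (0:ℝ) {(0:ℝ)}ᶜ, c/2 < slope (deriv f) 0 t :=
      hslope.eventually (eventually_gt_nhds (by linarith))
    have h2 : ∀ᶠ t in nhdsWithin (0:ℝ) (Set.Ioi 0), c/2 < slope (deriv f) 0 t :=
      nhdsWithin_mono _ (fun t (ht : t ∈ Set.Ioi 0) => ne_of_gt ht) h1
    filter_upwards [h2, self_mem_nhdsWithin] with t ht ht0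
    have htpos : (0:ℝ) < t := ht0
    have hs : slope (deriv f) 0 t = deriv f t / t := by
      simp [slope, h0, div_eq_inv_mul]
    rw [hs] at ht
    have hq : 0 < deriv f t / t := lt_trans (half_pos h) ht
    have := (div_pos_iff.mp hq)
    rcases this with ⟨a, _⟩ | ⟨_, b⟩
    · exact a
    · linarith
  -- get δ with Ioo 0 δ ⊆ pos, ball δ ⊆ diff ∧ max
  rcases mem_nhdsGT_iff_exists_Ioo_subset.mp hpos with ⟨δ₁, hδ₁, hsub⟩
  have hδ₁pos : 0 < δ₁ := hδ₁
  have hcombined : ∀ᶠ t in nhds (0:ℝ), DifferentiableAt ℝ f t ∧ f t ≤ f 0 := hdiff.and hmax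
  rcases Metric.eventually_nhds_iff_ball.mp hcombined with ⟨δ₂, hδ₂pos, hball⟩
  set δ := min (δ₁/2) (δ₂/2) with hδ
  have hδpos : 0 < δ := lt_min (by linarith) (by linarith)
  have hIcc : Set.Icc (0:ℝ) δ ⊆ Metric.ball (0:ℝ) δ₂ := by
    intro t ht
    rw [Metric.mem_ball, Real.dist_eq]
    rcases ht with ⟨ht0, ht1⟩
    rw [sub_zero, abs_of_nonneg ht0]
    have : δ < δ₂ := lt_of_le_of_lt (min_le_right _ _) (by linarith)
    linarith
  have hmono : StrictMonoOn f (Set.Icc (0:ℝ) δ) := by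
    apply strictMonoOn_of_deriv_pos (convex_Icc 0 δ)
    · intro t ht
      exact ((hball t (hIcc ht)).1).continuousAt.continuousWithinAt
    · intro t ht
      rw [interior_Icc] at ht
      apply hsub
      constructor
      · exact ht.1
      · exact lt_of_lt_of_le ht.2 (le_trans (min_le_left _ _) (by linarith))
  have : f δ > f 0 := hmono ⟨le_refl 0, le_of_lt hδpos⟩ ⟨le_of_lt hδpos, le_refl δ⟩ hδpos
  have hle : f δ ≤ f 0 := (hball δ (hIcc ⟨le_of_lt hδpos, le_refl δ⟩)).2
  linarith
lemma second_dirderiv_nonpos_of_localMax {E : Type*} [NormedAddCommGroup E] [NormedSpace ℝ E]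
    {v : E → ℝ} {x : E} (e : E)
    (hv1 : ∀ᶠ y in nhds x, DifferentiableAt ℝ v y)
    (hv2 : DifferentiableAt ℝ (fderiv ℝ v) x)
    (hmax : IsLocalMax v x) :
    fderiv ℝ (fun y => fderiv ℝ v y e) x e ≤ 0 := by
  set ℓ : ℝ → E := fun t => x + t • e with hℓ
  have hℓ0 : ℓ 0 = x := by simp [hℓ]
  have hℓd : ∀ t : ℝ, HasDerivAt ℓ e t := by
    intro t
    have := ((hasDerivAt_id t).smul_const e).const_add x
    rw [one_smul] at this
    exact this
  have hℓc : Continuous ℓ := by continuity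
  set f : ℝ → ℝ := fun t => v (ℓ t) with hf
  -- local max of f at 0
  have hfmax : IsLocalMax f 0 := by
    have := hmax
    rw [← hℓ0] at this
    exact this.comp_continuous hℓc.continuousAt
  -- differentiability and deriv formula near 0
  have hnear : ∀ᶠ t in nhds (0:ℝ), DifferentiableAt ℝ v (ℓ t) :=
    (hℓc.continuousAt (x := (0:ℝ))).eventually (by rwa [hℓ0])
  have hfd : ∀ᶠ t in nhds (0:ℝ), HasDerivAt f (fderiv ℝ v (ℓ t) e) t := by
    filter_upwards [hnear] with t ht
    exact ((ht.hasFDerivAt).comp_hasDerivAt t (hℓd t))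
  have hderiveq : (fun t => fderiv ℝ v (ℓ t) e) =ᶠ[nhds (0:ℝ)] deriv f := by
    filter_upwards [hfd] with t ht
    exact (ht.deriv).symm
  -- g := fun y => fderiv v y e  differentiable at x
  set g : E → ℝ := fun y => fderiv ℝ v y e with hg
  have hgd : DifferentiableAt ℝ g x :=
    (ContinuousLinearMap.apply ℝ ℝ e).differentiableAt.comp x hv2
  -- F := g ∘ ℓ has derivative fderiv g x e at 0
  have hF : HasDerivAt (fun t => g (ℓ t)) (fderiv ℝ g x e) 0 := by
    have hgx : HasFDerivAt g (fderiv ℝ g x) (ℓ 0) := by rw [hℓ0]; exact hgd.hasFDerivAt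
    exact hgx.comp_hasDerivAt 0 (hℓd 0)
  have hF' : HasDerivAt (deriv f) (fderiv ℝ g x e) 0 :=
    hF.congr_of_eventuallyEq hderiveq.symm
  have hfdiff : ∀ᶠ t in nhds (0:ℝ), DifferentiableAt ℝ f t := by
    filter_upwards [hfd] with t ht using ht.differentiableAt
  exact second_deriv_nonpos_of_localMax hfmax hfdiff hF'
variable {n : ℕ}

noncomputable def qfun (n : ℕ) : EuclideanSpace ℝ (Fin n) → ℝ := fun y => ∑ i, y i ^ 2

lemma qfun_hasFDerivAt (x : EuclideanSpace ℝ (Fin n)) :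
    HasFDerivAt (qfun n) (∑ i, (2 * x i) • EuclideanSpace.proj (𝕜 := ℝ) i) x := by
  have h : ∀ i : Fin n, HasFDerivAt (fun y : EuclideanSpace ℝ (Fin n) => y i ^ 2)
      ((2 * x i) • EuclideanSpace.proj (𝕜 := ℝ) i) x := by
    intro i
    have hp : HasFDerivAt (fun y : EuclideanSpace ℝ (Fin n) => y i)
        (EuclideanSpace.proj (𝕜 := ℝ) i) x := (EuclideanSpace.proj (𝕜 := ℝ) i).hasFDerivAt
    have := hp.mul hp
    have h2 : x i • EuclideanSpace.proj (𝕜 := ℝ) i + x i • EuclideanSpace.proj (𝕜 := ℝ) i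
        = (2 * x i) • EuclideanSpace.proj (𝕜 := ℝ) i := by
      rw [← add_smul]; ring_nf
    rw [h2] at this
    rw [show (fun y : EuclideanSpace ℝ (Fin n) => y i ^ 2) = (fun y => y i) * (fun y => y i) from by
      funext y; simp [pow_two]]
    exact this
  exact HasFDerivAt.fun_sum (u := Finset.univ) (fun i _ => h i)

lemma qfun_fderiv_apply (x e : EuclideanSpace ℝ (Fin n)) :
    fderiv ℝ (qfun n) x e = ∑ i, 2 * x i * e i := by
  rw [(qfun_hasFDerivAt x).fderiv]
  simp [mul_assoc]

lemma qfun_snd (x e : EuclideanSpace ℝ (Fin n)) :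
    fderiv ℝ (fun y => fderiv ℝ (qfun n) y e) x e = ∑ i, 2 * e i * e i := by
  have hfun : (fun y : EuclideanSpace ℝ (Fin n) => fderiv ℝ (qfun n) y e)
      = ⇑(∑ i, (2 * e i) • EuclideanSpace.proj (𝕜 := ℝ) i) := by
    funext y
    rw [qfun_fderiv_apply]
    simp [mul_assoc, mul_comm (y _)]
  rw [hfun, ContinuousLinearMap.fderiv]
  simp [mul_assoc]

lemma qfun_snd_single (x : EuclideanSpace ℝ (Fin n)) :
    ∑ j : Fin n, fderiv ℝ (fun y => fderiv ℝ (qfun n) y (EuclideanSpace.single j 1)) x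
      (EuclideanSpace.single j 1) = 2 * n := by
  have : ∀ j : Fin n, fderiv ℝ (fun y => fderiv ℝ (qfun n) y (EuclideanSpace.single j 1)) x
      (EuclideanSpace.single j 1) = 2 := by
    intro j
    rw [qfun_snd]
    simp [EuclideanSpace.single_apply]
  simp [this, mul_comm]

lemma qfun_eq_norm_sq (y : EuclideanSpace ℝ (Fin n)) : qfun n y = ‖y‖ ^ 2 := by
  rw [EuclideanSpace.norm_eq, Real.sq_sqrt (by positivity)]
  simp [qfun, sq_abs]

lemma qfun_nonneg (y : EuclideanSpace ℝ (Fin n)) : 0 ≤ qfun n y := by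
  rw [qfun_eq_norm_sq]; positivity

lemma qfun_le {R : ℝ} {y : EuclideanSpace ℝ (Fin n)} (h : ‖y‖ ≤ R) : qfun n y ≤ R ^ 2 := by
  rw [qfun_eq_norm_sq]
  exact pow_le_pow_left₀ (norm_nonneg y) h 2

lemma qfun_contDiff : ContDiff ℝ 2 (qfun n) := by
  unfold qfun
  exact ContDiff.sum fun i _ => ((EuclideanSpace.proj (𝕜 := ℝ) i).contDiff).pow 2

lemma no_interior_max {n : ℕ} (hn : 1 ≤ n) {Ω : Set (EuclideanSpace ℝ (Fin n))}
    (hΩo : IsOpen Ω) {u : EuclideanSpace ℝ (Fin n) → ℝ}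
    (hharm : IsHarmonicOn u Ω) {δ : ℝ} (hδ : 0 < δ)
    {x₀ : EuclideanSpace ℝ (Fin n)} (hx₀ : x₀ ∈ Ω)
    (hmax : IsLocalMax (fun y => u y + δ * qfun n y) x₀) : False := by
  set v : EuclideanSpace ℝ (Fin n) → ℝ := fun y => u y + δ * qfun n y with hv
  have hud : DifferentiableOn ℝ u Ω := hharm.1.differentiableOn (by norm_num)
  have hC1 : ContDiffOn ℝ 1 (fderiv ℝ u) Ω := hharm.1.fderiv_of_isOpen hΩo (by norm_num)
  have hfd_diff : ∀ y ∈ Ω, DifferentiableAt ℝ (fderiv ℝ u) y := fun y hy =>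
    ((hC1.differentiableOn (by norm_num)).differentiableAt (hΩo.mem_nhds hy))
  have hqd : Differentiable ℝ (qfun n) := qfun_contDiff.differentiable (by norm_num)
  have hqfd : Differentiable ℝ (fderiv ℝ (qfun n)) :=
    (qfun_contDiff.fderiv_right (m := 1) (by norm_num)).differentiable (by norm_num)
  have huda : ∀ y ∈ Ω, DifferentiableAt ℝ u y := fun y hy =>
    hud.differentiableAt (hΩo.mem_nhds hy)
  -- eventual equality of fderiv v with sum
  have heq : (fderiv ℝ v) =ᶠ[nhds x₀]
      (fun y => fderiv ℝ u y + δ • fderiv ℝ (qfun n) y) := by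
    filter_upwards [hΩo.mem_nhds hx₀] with y hy
    rw [hv]
    rw [fderiv_fun_add (huda y hy) ((hqd y).const_mul δ), fderiv_const_mul (hqd y)]
  have hv1 : ∀ᶠ y in nhds x₀, DifferentiableAt ℝ v y := by
    filter_upwards [hΩo.mem_nhds hx₀] with y hy
    exact (huda y hy).add ((hqd y).const_mul δ)
  have hv2 : DifferentiableAt ℝ (fderiv ℝ v) x₀ := by
    apply DifferentiableAt.congr_of_eventuallyEq _ heq
    exact (hfd_diff x₀ hx₀).add ((hqfd x₀).const_smul δ)
  -- directional second derivative values
  have key : ∀ e : EuclideanSpace ℝ (Fin n),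
      fderiv ℝ (fun y => fderiv ℝ v y e) x₀ e
        = fderiv ℝ (fun y => fderiv ℝ u y e) x₀ e
          + δ * fderiv ℝ (fun y => fderiv ℝ (qfun n) y e) x₀ e := by
    intro e
    have heq2 : (fun y => fderiv ℝ v y e) =ᶠ[nhds x₀]
        (fun y => fderiv ℝ u y e + δ * fderiv ℝ (qfun n) y e) := by
      filter_upwards [heq] with y hy
      rw [hy]; simp
    rw [heq2.fderiv_eq]
    have hue : DifferentiableAt ℝ (fun y => fderiv ℝ u y e) x₀ :=
      (ContinuousLinearMap.apply ℝ ℝ e).differentiableAt.comp x₀ (hfd_diff x₀ hx₀)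
    have hqe : DifferentiableAt ℝ (fun y => fderiv ℝ (qfun n) y e) x₀ :=
      (ContinuousLinearMap.apply ℝ ℝ e).differentiableAt.comp x₀ (hqfd x₀)
    rw [fderiv_fun_add hue (hqe.const_mul δ), fderiv_const_mul hqe]
    simp
  -- each directional second derivative of v is ≤ 0
  have hle : ∀ e, fderiv ℝ (fun y => fderiv ℝ v y e) x₀ e ≤ 0 := fun e =>
    second_dirderiv_nonpos_of_localMax e hv1 hv2 hmax
  -- sum over directions
  have hsum : ∑ i : Fin n, fderiv ℝ (fun y => fderiv ℝ v y (EuclideanSpace.single i 1)) x₀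
      (EuclideanSpace.single i 1) = δ * (2 * n) := by
    have step : ∑ i : Fin n, fderiv ℝ (fun y => fderiv ℝ v y (EuclideanSpace.single i 1)) x₀
        (EuclideanSpace.single i 1)
        = ∑ i : Fin n, (fderiv ℝ (fun y => fderiv ℝ u y (EuclideanSpace.single i 1)) x₀
            (EuclideanSpace.single i 1)
          + δ * fderiv ℝ (fun y => fderiv ℝ (qfun n) y (EuclideanSpace.single i 1)) x₀
            (EuclideanSpace.single i 1)) := Finset.sum_congr rfl fun i _ => key _
    rw [step, Finset.sum_add_distrib, hharm.2 x₀ hx₀, ← Finset.mul_sum, qfun_snd_single]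
    ring
  have hnn : (0:ℝ) < δ * (2 * n) := by
    have : (1:ℝ) ≤ n := by exact_mod_cast hn
    nlinarith
  have : ∑ i : Fin n, fderiv ℝ (fun y => fderiv ℝ v y (EuclideanSpace.single i 1)) x₀
      (EuclideanSpace.single i 1) ≤ 0 :=
    Finset.sum_nonpos fun i _ => hle _
  linarith [hsum ▸ this]

lemma half_vanishing {n : ℕ} (hn : 1 ≤ n)
    {Ω : Set (EuclideanSpace ℝ (Fin n))} (hΩo : IsOpen Ω)
    {u : EuclideanSpace ℝ (Fin n) → ℝ}
    (hcont : ContinuousOn u (closure Ω))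
    (hharm : IsHarmonicOn u Ω)
    (hzero : ∀ x ∈ frontier Ω, u x = 0)
    (hinf : Tendsto u (Filter.comap (fun x => ‖x‖) atTop ⊓ Filter.principal Ω) (nhds 0)) :
    ∀ x ∈ Ω, u x ≤ 0 := by
  intro x hx
  have : ∀ ε > (0:ℝ), u x ≤ 0 + ε := by
    intro ε hε
    have hev : ∀ᶠ y in Filter.comap (fun x : EuclideanSpace ℝ (Fin n) => ‖x‖) atTop
        ⊓ Filter.principal Ω, |u y| < ε/2 := by
      have := Metric.tendsto_nhds.mp hinf (ε/2) (by linarith)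
      simpa [Real.dist_eq] using this
    rw [eventually_inf_principal, eventually_comap, eventually_atTop] at hev
    obtain ⟨R, hR⟩ := hev
    have hRbound : ∀ y ∈ Ω, R ≤ ‖y‖ → |u y| < ε/2 := fun y hy h => hR ‖y‖ h y rfl hy
    set R' : ℝ := max R (‖x‖ + 1) with hR'
    have hR'pos : 0 < R' := lt_of_lt_of_le (by positivity) (le_max_right _ _)
    set δ : ℝ := (ε/2)/(R'^2) with hδdef
    have hδpos : 0 < δ := by positivity
    have hδR : δ * R'^2 = ε/2 := div_mul_cancel₀ _ (by positivity)
    set v : EuclideanSpace ℝ (Fin n) → ℝ := fun y => u y + δ * qfun n y with hv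
    set K := closure Ω ∩ Metric.closedBall (0 : EuclideanSpace ℝ (Fin n)) R' with hK
    have hKc : IsCompact K := (isCompact_closedBall _ R').inter_left isClosed_closure
    have hxK : x ∈ K := ⟨subset_closure hx, by
      rw [Metric.mem_closedBall, dist_zero_right]
      exact le_trans (by linarith) (le_max_right _ _)⟩
    have hvc : ContinuousOn v K := by
      apply ContinuousOn.add (hcont.mono Set.inter_subset_left)
      exact (continuous_const.mul qfun_contDiff.continuous).continuousOn
    obtain ⟨x₀, hx₀K, hx₀max⟩ := hKc.exists_isMaxOn ⟨x, hxK⟩ hvc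
    have hbound : v x₀ ≤ ε/2 + δ * R'^2 := by
      by_cases hΩ0 : x₀ ∈ Ω
      · by_cases hlt : ‖x₀‖ < R'
        · exfalso
          apply no_interior_max hn hΩo hharm hδpos hΩ0
          have hU : (Ω ∩ Metric.ball (0 : EuclideanSpace ℝ (Fin n)) R') ∈ nhds x₀ :=
            (hΩo.inter Metric.isOpen_ball).mem_nhds ⟨hΩ0, mem_ball_zero_iff.mpr hlt⟩
          filter_upwards [hU] with y hy
          exact hx₀max ⟨subset_closure hy.1, Metric.ball_subset_closedBall hy.2⟩
        · have h1 : |u x₀| < ε/2 :=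
            hRbound x₀ hΩ0 (le_trans (le_max_left _ _) (not_lt.mp hlt))
          have h2 : qfun n x₀ ≤ R'^2 := qfun_le (mem_closedBall_zero_iff.mp hx₀K.2)
          have h3 := (abs_le.mp h1.le).2
          have : v x₀ = u x₀ + δ * qfun n x₀ := rfl
          nlinarith
      · have hf : x₀ ∈ frontier Ω := by
          rw [frontier, hΩo.interior_eq]; exact ⟨hx₀K.1, hΩ0⟩
        have h0 : u x₀ = 0 := hzero x₀ hf
        have h2 : qfun n x₀ ≤ R'^2 := qfun_le (mem_closedBall_zero_iff.mp hx₀K.2)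
        have : v x₀ = u x₀ + δ * qfun n x₀ := rfl
        nlinarith
    have hvx : v x ≤ v x₀ := hx₀max hxK
    have hqx : 0 ≤ qfun n x := qfun_nonneg x
    have hvxe : v x = u x + δ * qfun n x := rfl
    have hmn : 0 ≤ δ * qfun n x := mul_nonneg hδpos.le hqx
    rw [hδR] at hbound
    clear_value v δ R' K
    linarith
  linarith [le_of_forall_pos_le_add this]

/-- a bounded harmonic function on a domain `Ω ⊆ ℝ^n`, continuous
up to the boundary, vanishing continuously on `∂Ω` and tending to `0` at
infinity within `Ω`, vanishes identically on `Ω`.  (The probabilistic hypothesis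
that Brownian motion either exits `Ω` or tends to infinity almost surely holds
automatically.) -/
theorem bounded_harmonic_vanishing (n : ℕ) (hn : 1 ≤ n)
    (Ω : Set (EuclideanSpace ℝ (Fin n))) (hΩo : IsOpen Ω) (hΩc : IsConnected Ω)
    (u : EuclideanSpace ℝ (Fin n) → ℝ)
    (hcont : ContinuousOn u (closure Ω))
    (hbdd : ∃ Cu : ℝ, ∀ x, |u x| ≤ Cu)
    (hharm : IsHarmonicOn u Ω)
    (hzero : ∀ x ∈ frontier Ω, u x = 0)
    (hinf : Tendsto u (Filter.comap (fun x => ‖x‖) atTop ⊓ Filter.principal Ω) (nhds 0)) :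
    ∀ x ∈ Ω, u x = 0 := by
  intro x hx
  have h1 : u x ≤ 0 := half_vanishing hn hΩo hcont hharm hzero hinf x hx
  have hharm' : IsHarmonicOn (fun y => -u y) Ω := by
    constructor
    · exact hharm.1.neg
    · intro z hz
      have hsum := hharm.2 z hz
      have : ∀ i : Fin n,
          fderiv ℝ (fun y => fderiv ℝ (fun w => -u w) y (EuclideanSpace.single i 1)) z
            (EuclideanSpace.single i 1)
          = -(fderiv ℝ (fun y => fderiv ℝ u y (EuclideanSpace.single i 1)) z
            (EuclideanSpace.single i 1)) := by
        intro i
        have he : (fun y => fderiv ℝ (fun w => -u w) y (EuclideanSpace.single i 1))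
            = fun y => -(fderiv ℝ u y (EuclideanSpace.single i 1)) := by
          funext y
          rw [fderiv_fun_neg]
          simp
        rw [he, fderiv_fun_neg]
        simp
      rw [Finset.sum_congr rfl fun i _ => this i, Finset.sum_neg_distrib, hsum, neg_zero]
  have h2 : -u x ≤ 0 := by
    apply half_vanishing hn hΩo hcont.neg hharm' _ _ x hx
    · intro y hy; simp [hzero y hy]
    · have := hinf.neg
      rw [neg_zero] at this
      exact this
  linarith
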